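/- Let S be a 2m×2n matrix over a commutative ring with m ≤ n, and let S_j denote the j-th column of S. Then ∑_{1 ≤ k_1 < ⋯ < k_m ≤ n} det(S_{k_1},…,S_{k_m},S_{2n+1-k_m},…,S_{2n+1-k_1}) = Pf_{1≤i,j≤2m}( ∑_{k=1}^{n} ( S_{ik} S_{j,2n+1-k} − S_{jk} S_{i,2n+1-k} ) ). -/

import Mathlib

open Matrix

/-- The `k`-th even-indexed position in `Fin (2 * n)`. -/
def fe {n : ℕ} (k : Fin n) : Fin (2 * n) := ⟨2 * k.1, by have := k.isLt; omega⟩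

/-- The `k`-th odd-indexed position in `Fin (2 * n)`. -/
def fo {n : ℕ} (k : Fin n) : Fin (2 * n) := ⟨2 * k.1 + 1, by have := k.isLt; omega⟩

/-- The Pfaffian of a `2n × 2n` matrix: the sum, over all perfect matchings
`{{m₁, m₂}, …, {m₂ₙ₋₁, m₂ₙ}}` of `{1, …, 2n}` (encoded as the permutations
`σ` with `σ(2k-1) < σ(2k)` and `σ(1) < σ(3) < ⋯ < σ(2n-1)`), of
`sgn(σ) · ∏ₖ M_{σ(2k-1), σ(2k)}`. -/
def Pf {R : Type*} [CommRing R] {n : ℕ}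
    (M : Matrix (Fin (2 * n)) (Fin (2 * n)) R) : R :=
  ∑ σ ∈ Finset.univ.filter (fun σ : Equiv.Perm (Fin (2 * n)) =>
      (∀ k : Fin n, σ (fe k) < σ (fo k)) ∧
      ∀ k l : Fin n, k < l → σ (fe k) < σ (fe l)),
    (Equiv.Perm.sign σ : ℤ) • ∏ k : Fin n, M (σ (fe k)) (σ (fo k))

/-- Column `k` of a `2n`-column matrix (0-indexed encoding of column `k+1`). -/
def colLow {n : ℕ} (k : Fin n) : Fin (2 * n) :=
  ⟨k.1, by have := k.isLt; omega⟩

/-- Column `2n + 1 - (k+1)` of a `2n`-column matrix (0-indexed encoding). -/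
def colHigh {n : ℕ} (k : Fin n) : Fin (2 * n) :=
  ⟨2 * n - 1 - k.1, by have := k.isLt; omega⟩

/-- Given `k₁ < ⋯ < kₘ` (encoded by a strictly monotone `f : Fin m → Fin n`),
the list of column indices `k₁, …, kₘ, 2n+1-kₘ, …, 2n+1-k₁` of a `2n`-column
matrix. -/
def mirrorCols {m n : ℕ} (f : Fin m → Fin n) (j : Fin (2 * m)) : Fin (2 * n) :=
  if h : j.1 < m then colLow (f ⟨j.1, h⟩)
  else colHigh (f ⟨2 * m - 1 - j.1, by have := j.isLt; omega⟩)

namespace PfAux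

/-- mirror on `Fin (2*n)` -/
def mir {n : ℕ} (a : Fin (2 * n)) : Fin (2 * n) := ⟨2 * n - 1 - a.1, by have := a.isLt; omega⟩

/-- class representative -/
def rep {n : ℕ} (a : Fin (2 * n)) : Fin n :=
  if h : a.1 < n then ⟨a.1, h⟩ else ⟨2 * n - 1 - a.1, by have := a.isLt; omega⟩

@[simp] lemma mir_colLow {n : ℕ} (k : Fin n) : mir (colLow k) = colHigh k := by
  simp [mir, colLow, colHigh]

@[simp] lemma mir_colHigh {n : ℕ} (k : Fin n) : mir (colHigh k) = colLow k := by
  have := k.isLt; simp only [mir, colHigh, colLow]; congr 1; omega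

@[simp] lemma rep_colLow {n : ℕ} (k : Fin n) : rep (colLow k) = k := by
  have := k.isLt; simp [rep, colLow]

@[simp] lemma rep_colHigh {n : ℕ} (k : Fin n) : rep (colHigh k) = k := by
  have := k.isLt
  apply Fin.ext
  simp only [rep, colHigh, dif_neg (show ¬ (2 * n - 1 - k.1 < n) by omega)]
  show ((if h : 2 * n - 1 - k.1 < n then (⟨2 * n - 1 - k.1, h⟩ : Fin n) else ⟨2 * n - 1 - (2 * n - 1 - k.1), by omega⟩ : Fin n)).1 = k.1
  rw [dif_neg (show ¬ (2 * n - 1 - k.1 < n) by omega)]; show 2 * n - 1 - (2 * n - 1 - k.1) = k.1; omega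

lemma rep_eq_cases {n : ℕ} {a b : Fin (2 * n)} (h : rep a = rep b) :
    a = b ∨ a = mir b := by
  have ha := a.isLt; have hb := b.isLt
  have h' := congrArg Fin.val h
  simp only [rep] at h'
  split_ifs at h' <;> [left; right; right; left] <;>
    · apply Fin.ext; simp only [mir] at *; omega

lemma colLow_rep_of_lt {n : ℕ} {a : Fin (2 * n)} (h : a.1 < n) : colLow (rep a) = a := by
  apply Fin.ext; simp [colLow, rep, h]

lemma colHigh_rep_of_ge {n : ℕ} {a : Fin (2 * n)} (h : ¬ a.1 < n) : colHigh (rep a) = a := by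
  have := a.isLt
  apply Fin.ext; simp only [colHigh, rep, dif_neg h]; omega

lemma fe_injective {n : ℕ} : Function.Injective (fe (n := n)) := by
  intro a b h; have := congrArg Fin.val h; simp only [fe] at this; exact Fin.ext (by omega)

lemma fe_ne_fo {n : ℕ} (k l : Fin n) : fe k ≠ fo l := by
  intro h; have := congrArg Fin.val h; simp only [fe, fo] at this; omega

/-- pairing equivalence -/
def eP {m : ℕ} : Fin m × Bool ≃ Fin (2 * m) where
  toFun x := if x.2 then fo x.1 else fe x.1
  invFun j := (⟨j.1 / 2, by have := j.isLt; omega⟩, decide (j.1 % 2 = 1))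
  left_inv := by
    rintro ⟨k, b⟩
    have := k.isLt
    cases b <;> simp only [fe, fo, if_true, if_false] <;>
      refine Prod.ext (Fin.ext ?_) ?_ <;> simp <;> omega
  right_inv := by
    intro j
    have hj := j.isLt
    show (if (decide (j.1 % 2 = 1)) = true then fo ⟨j.1 / 2, by omega⟩
      else fe ⟨j.1 / 2, by omega⟩) = j
    by_cases h1 : j.1 % 2 = 1
    · rw [decide_eq_true h1, if_pos rfl]
      apply Fin.ext; simp only [fo]; omega
    · rw [decide_eq_false h1]
      simp only [Bool.false_eq_true, if_false]
      apply Fin.ext; simp only [fe]; omega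

@[simp] lemma eP_false {m : ℕ} (k : Fin m) : eP (k, false) = fe k := rfl
@[simp] lemma eP_true {m : ℕ} (k : Fin m) : eP (k, true) = fo k := rfl
@[simp] lemma eP_symm_fe {m : ℕ} (k : Fin m) : eP.symm (fe k) = (k, false) := by
  rw [Equiv.symm_apply_eq]; rfl
@[simp] lemma eP_symm_fo {m : ℕ} (k : Fin m) : eP.symm (fo k) = (k, true) := by
  rw [Equiv.symm_apply_eq]; rfl

end PfAux

namespace PfAux

open Equiv Equiv.Perm

variable {m : ℕ}

/-- hyperoctahedral element on `Fin m × Bool` -/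
def hyp (s : Fin m → Bool) (π : Equiv.Perm (Fin m)) : Equiv.Perm (Fin m × Bool) :=
  (Equiv.prodCongrLeft fun _ : Bool => π) *
    (Equiv.prodCongrRight fun k => if s k then Equiv.swap false true else 1)

lemma swap_bool (b : Bool) : Equiv.swap false true b = !b := by
  cases b <;> simp [Equiv.swap_apply_of_ne_of_ne]

lemma hyp_apply (s : Fin m → Bool) (π : Equiv.Perm (Fin m)) (k : Fin m) (b : Bool) :
    hyp s π (k, b) = (π k, xor (s k) b) := by
  simp only [hyp, Equiv.Perm.mul_apply, Equiv.prodCongrRight_apply,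
    Equiv.prodCongrLeft_apply]
  cases hs : s k <;> simp [swap_bool, Bool.xor_comm]

/-- the corresponding permutation of `Fin (2*m)` -/
def P (s : Fin m → Bool) (π : Equiv.Perm (Fin m)) : Equiv.Perm (Fin (2 * m)) :=
  Equiv.permCongr eP (hyp s π)

lemma P_apply_fe (s : Fin m → Bool) (π : Equiv.Perm (Fin m)) (k : Fin m) :
    P s π (fe k) = if s k then fo (π k) else fe (π k) := by
  simp only [P, Equiv.permCongr_apply, eP_symm_fe, hyp_apply]
  cases hs : s k <;> simp

lemma P_apply_fo (s : Fin m → Bool) (π : Equiv.Perm (Fin m)) (k : Fin m) :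
    P s π (fo k) = if s k then fe (π k) else fo (π k) := by
  simp only [P, Equiv.permCongr_apply, eP_symm_fo, hyp_apply]
  cases hs : s k <;> simp

lemma hyp_mul (a : Fin m → Bool) (α : Equiv.Perm (Fin m)) (b : Fin m → Bool)
    (β : Equiv.Perm (Fin m)) :
    hyp a α * hyp b β = hyp (fun k => xor (a (β k)) (b k)) (α * β) := by
  apply Equiv.ext
  rintro ⟨k, c⟩
  simp only [Equiv.Perm.mul_apply, hyp_apply]
  congr 1
  cases a (β k) <;> cases b k <;> cases c <;> rfl

lemma P_mul (a : Fin m → Bool) (α : Equiv.Perm (Fin m)) (b : Fin m → Bool)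
    (β : Equiv.Perm (Fin m)) :
    P a α * P b β = P (fun k => xor (a (β k)) (b k)) (α * β) := by
  simp only [P]
  apply Equiv.ext
  intro j
  simp only [Equiv.Perm.mul_apply, Equiv.permCongr_apply, Equiv.symm_apply_apply, ← hyp_mul,
    Equiv.Perm.mul_apply]

lemma hyp_one : hyp (fun _ : Fin m => false) 1 = 1 := by
  apply Equiv.ext; rintro ⟨k, c⟩; simp [hyp_apply]

lemma P_one : P (fun _ : Fin m => false) 1 = 1 := by
  simp only [P, hyp_one]
  apply Equiv.ext; intro j; simp

lemma sign_P (s : Fin m → Bool) (π : Equiv.Perm (Fin m)) :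
    Equiv.Perm.sign (P s π) = ∏ k : Fin m, (if s k then (-1 : ℤˣ) else 1) := by
  rw [P, Equiv.Perm.sign_permCongr, hyp, _root_.map_mul, Equiv.Perm.sign_prodCongrLeft,
    Equiv.Perm.sign_prodCongrRight]
  have h1 : ∏ _b : Bool, Equiv.Perm.sign π = 1 := by
    rw [Finset.prod_const]
    simp [Int.units_sq]
  rw [h1, one_mul]
  apply Finset.prod_congr rfl
  intro k _
  cases hs : s k <;> simp [Equiv.Perm.sign_swap]

end PfAux

namespace PfAux

open Equiv Equiv.Perm

lemma sign_eq_signAux {N : ℕ} (f : Equiv.Perm (Fin N)) :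
    Equiv.Perm.sign f = Equiv.Perm.signAux f := by
  refine Equiv.Perm.swap_induction_on f ?_ ?_
  · simp [Equiv.Perm.signAux_one]
  · intro f x y hxy ih
    rw [_root_.map_mul, Equiv.Perm.signAux_mul, Equiv.Perm.sign_swap hxy,
      Equiv.Perm.signAux_swap hxy, ih]

variable {m : ℕ}

/-- the fixed permutation relating pair-order to mirror-order -/
def rho : Equiv.Perm (Fin (2 * m)) where
  toFun j := if h : j.1 < m then fe ⟨j.1, h⟩ else fo ⟨2 * m - 1 - j.1, by have := j.isLt; omega⟩
  invFun j := if j.1 % 2 = 0 then ⟨j.1 / 2, by have := j.isLt; omega⟩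
    else ⟨2 * m - 1 - j.1 / 2, by have := j.isLt; omega⟩
  left_inv := by
    intro j
    have hj := j.isLt
    beta_reduce
    by_cases h : j.1 < m
    · rw [dif_pos h]
      simp only [fe]
      simp only [show 2 * j.1 % 2 = 0 by omega, if_true]
      apply Fin.ext; simp; try omega
    · rw [dif_neg h]
      simp only [fo]
      simp only [show ¬ (2 * (2 * m - 1 - j.1) + 1) % 2 = 0 by omega, if_false]
      apply Fin.ext; simp; try omega
  right_inv := by
    intro j
    have hj := j.isLt
    beta_reduce
    by_cases h : j.1 % 2 = 0
    · rw [if_pos h, dif_pos (show j.1 / 2 < m by omega)]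
      apply Fin.ext; simp [fe]; omega
    · rw [if_neg h, dif_neg (show ¬ 2 * m - 1 - j.1 / 2 < m by omega)]
      apply Fin.ext; simp [fo]; omega

lemma rho_val (j : Fin (2 * m)) :
    (rho j).1 = if j.1 < m then 2 * j.1 else 2 * (2 * m - 1 - j.1) + 1 := by
  show (dite _ _ _ : Fin (2*m)).1 = _
  by_cases h : j.1 < m
  · rw [dif_pos h, if_pos h]; rfl
  · rw [dif_neg h, if_neg h]; rfl

lemma sign_rho : Equiv.Perm.sign (rho (m := m)) = 1 := by
  rw [sign_eq_signAux]
  unfold Equiv.Perm.signAux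
  refine Finset.prod_involution
    (fun x hx => if h : rho x.1 ≤ rho x.2 then
      ⟨x.1, ⟨2 * m - 1 - x.2.1, by have := x.1.isLt; omega⟩⟩ else x) ?_ ?_ ?_ ?_
  · -- f a * f (g a) = 1
    intro x hx
    have hmem := Equiv.Perm.mem_finPairsLT.1 hx
    have hb : x.2.1 < x.1.1 := hmem
    have ha2 := x.1.isLt
    beta_reduce
    by_cases h : rho x.1 ≤ rho x.2
    · rw [dif_pos h, if_pos h]
      have hv1 := rho_val x.1
      have hv2 := rho_val x.2
      have hle : (rho x.1).1 ≤ (rho x.2).1 := h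
      have hv3 := rho_val (⟨2 * m - 1 - x.2.1, by omega⟩ : Fin (2 * m))
      have h2 : (rho x.1).1 ≤ (rho (⟨2 * m - 1 - x.2.1, by omega⟩ : Fin (2 * m))).1 := by
        simp only [hv1, hv2, hv3] at *
        split_ifs at * <;> omega
      rw [if_pos (show rho x.1 ≤ rho _ from h2)]
      decide
    · rw [dif_neg h, if_neg h]
      decide
  · -- f a ≠ 1 → g a ≠ a
    intro x hx hf
    have hmem := Equiv.Perm.mem_finPairsLT.1 hx
    have hb : x.2.1 < x.1.1 := hmem
    have ha2 := x.1.isLt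
    beta_reduce
    by_cases h : rho x.1 ≤ rho x.2
    · rw [dif_pos h]
      intro hcon
      have := congrArg (fun y => (Sigma.snd y).1) hcon
      simp at this
      have hv1 := rho_val x.1
      have hv2 := rho_val x.2
      have hle : (rho x.1).1 ≤ (rho x.2).1 := h
      split_ifs at hv1 hv2 <;> omega
    · rw [if_neg h] at hf; simp at hf
  · -- g a ∈ s
    intro x hx
    have hmem := Equiv.Perm.mem_finPairsLT.1 hx
    have hb : x.2.1 < x.1.1 := hmem
    have ha2 := x.1.isLt
    beta_reduce
    by_cases h : rho x.1 ≤ rho x.2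
    · rw [dif_pos h]
      apply Equiv.Perm.mem_finPairsLT.2
      show (2 * m - 1 - x.2.1) < x.1.1
      have hv1 := rho_val x.1
      have hv2 := rho_val x.2
      have hle : (rho x.1).1 ≤ (rho x.2).1 := h
      split_ifs at hv1 hv2 <;> omega
    · rw [dif_neg h]; exact hx
  · -- involution
    intro x hx
    have hmem := Equiv.Perm.mem_finPairsLT.1 hx
    have hb : x.2.1 < x.1.1 := hmem
    have ha2 := x.1.isLt
    beta_reduce
    by_cases h : rho x.1 ≤ rho x.2
    · rw [dif_pos h]
      have hv1 := rho_val x.1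
      have hv2 := rho_val x.2
      have hle : (rho x.1).1 ≤ (rho x.2).1 := h
      have hv3 := rho_val (⟨2 * m - 1 - x.2.1, by omega⟩ : Fin (2 * m))
      have h2 : (rho x.1).1 ≤ (rho (⟨2 * m - 1 - x.2.1, by omega⟩ : Fin (2 * m))).1 := by
        simp only [hv1, hv2, hv3] at *
        split_ifs at * <;> omega
      rw [dif_pos (show rho x.1 ≤ rho _ from h2)]
      congr 1
      apply Fin.ext
      show (2 * m - 1 - (2 * m - 1 - x.2.1)) = x.2.1
      omega
    · rw [dif_neg h, dif_neg h]

end PfAux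

namespace PfAux

open Equiv Equiv.Perm Finset

variable {m : ℕ}

def esZ (s : Fin m → Bool) : ℤ := ∏ k : Fin m, if s k then -1 else 1

lemma esZ_mul_self (s : Fin m → Bool) : esZ s * esZ s = 1 := by
  rw [esZ, ← Finset.prod_mul_distrib]
  rw [Finset.prod_congr rfl (fun k _ => show (if s k then (-1:ℤ) else 1) * (if s k then -1 else 1) = 1
    by cases s k <;> simp)]
  exact Finset.prod_const_one

lemma sign_P_coe (s : Fin m → Bool) (π : Equiv.Perm (Fin m)) :
    ((Equiv.Perm.sign (P s π) : ℤˣ) : ℤ) = esZ s := by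
  rw [sign_P, esZ]
  rw [show ((∏ k : Fin m, if s k then (-1:ℤˣ) else 1 : ℤˣ) : ℤ)
      = ∏ k : Fin m, ((if s k then (-1:ℤˣ) else 1 : ℤˣ) : ℤ) from
    map_prod (Units.coeHom ℤ) _ _]
  exact Finset.prod_congr rfl fun k _ => by cases s k <;> simp

lemma esZ_cast {R : Type*} [CommRing R] (s : Fin m → Bool) :
    ((esZ s : ℤ) : R) = ∏ k : Fin m, if s k then (-1 : R) else 1 := by
  rw [esZ, Int.cast_prod]
  exact Finset.prod_congr rfl fun k _ => by cases s k <;> simp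

section Orbit

variable {R : Type*} [CommRing R]

/-- the summand -/
def Fterm (M : Matrix (Fin (2 * m)) (Fin (2 * m)) R) (τ : Equiv.Perm (Fin (2 * m))) : R :=
  (Equiv.Perm.sign τ : ℤ) • ∏ k : Fin m, M (τ (fe k)) (τ (fo k))

lemma Fterm_invariant (M : Matrix (Fin (2 * m)) (Fin (2 * m)) R)
    (hskew : ∀ i j, M j i = - M i j) (σ : Equiv.Perm (Fin (2 * m)))
    (s : Fin m → Bool) (π : Equiv.Perm (Fin m)) :
    Fterm M (σ * P s π) = Fterm M σ := by
  have hprod : ∏ k : Fin m, M ((σ * P s π) (fe k)) ((σ * P s π) (fo k)) =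
      ((esZ s : ℤ) : R) * ∏ k : Fin m, M (σ (fe k)) (σ (fo k)) := by
    rw [esZ_cast]
    rw [show (∏ k : Fin m, M (σ (fe k)) (σ (fo k))) =
        ∏ k : Fin m, M (σ (fe (π k))) (σ (fo (π k))) from
      (Equiv.prod_comp π fun k => M (σ (fe k)) (σ (fo k))).symm]
    rw [← Finset.prod_mul_distrib]
    apply Finset.prod_congr rfl
    intro k _
    simp only [Equiv.Perm.mul_apply, P_apply_fe, P_apply_fo]
    cases hs : s k
    · simp
    · simp only [if_true]
      rw [hskew]
      ring
  rw [Fterm, Fterm, _root_.map_mul, hprod, Units.val_mul, sign_P_coe,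
    zsmul_eq_mul, zsmul_eq_mul]
  push_cast
  have hb : ((esZ s : ℤ) : R) * ((esZ s : ℤ) : R) = 1 := by
    rw [← Int.cast_mul, esZ_mul_self, Int.cast_one]
  rw [show (((Equiv.Perm.sign σ : ℤˣ) : ℤ) : R) * ((esZ s : ℤ) : R) *
      (((esZ s : ℤ) : R) * ∏ k : Fin m, M (σ (fe k)) (σ (fo k)))
    = (((Equiv.Perm.sign σ : ℤˣ) : ℤ) : R) * (((esZ s : ℤ) : R) * ((esZ s : ℤ) : R)) *
      ∏ k : Fin m, M (σ (fe k)) (σ (fo k)) from by ring, hb, mul_one]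

/-- unflip pattern -/
def sfun (τ : Equiv.Perm (Fin (2 * m))) : Fin m → Bool :=
  fun k => decide (τ (fo k) < τ (fe k))

def tau1 (τ : Equiv.Perm (Fin (2 * m))) : Equiv.Perm (Fin (2 * m)) :=
  τ * P (sfun τ) 1

def sortp (τ : Equiv.Perm (Fin (2 * m))) : Equiv.Perm (Fin m) :=
  Tuple.sort (fun k => tau1 τ (fe k))

def canon (τ : Equiv.Perm (Fin (2 * m))) : Equiv.Perm (Fin (2 * m)) :=
  tau1 τ * P (fun _ => false) (sortp τ)

lemma tau1_fe (τ : Equiv.Perm (Fin (2 * m))) (k : Fin m) :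
    tau1 τ (fe k) = if sfun τ k then τ (fo k) else τ (fe k) := by
  rw [tau1, Equiv.Perm.mul_apply, P_apply_fe]
  cases h : sfun τ k <;> simp

lemma tau1_fo (τ : Equiv.Perm (Fin (2 * m))) (k : Fin m) :
    tau1 τ (fo k) = if sfun τ k then τ (fe k) else τ (fo k) := by
  rw [tau1, Equiv.Perm.mul_apply, P_apply_fo]
  cases h : sfun τ k <;> simp

lemma tau1_lt (τ : Equiv.Perm (Fin (2 * m))) (k : Fin m) :
    tau1 τ (fe k) < tau1 τ (fo k) := by
  rw [tau1_fe, tau1_fo]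
  by_cases h : τ (fo k) < τ (fe k)
  · rw [sfun]
    rw [decide_eq_true h]
    simpa using h
  · rw [sfun, decide_eq_false h]
    simp only [Bool.false_eq_true, if_false]
    rcases lt_or_eq_of_le (not_lt.1 h) with h' | h'
    · exact h'
    · exact absurd (τ.injective h') (fe_ne_fo k k)

lemma canon_fe (τ : Equiv.Perm (Fin (2 * m))) (k : Fin m) :
    canon τ (fe k) = tau1 τ (fe (sortp τ k)) := by
  rw [canon, Equiv.Perm.mul_apply, P_apply_fe]
  simp

lemma canon_fo (τ : Equiv.Perm (Fin (2 * m))) (k : Fin m) :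
    canon τ (fo k) = tau1 τ (fo (sortp τ k)) := by
  rw [canon, Equiv.Perm.mul_apply, P_apply_fo]
  simp

lemma canon_strictMono (τ : Equiv.Perm (Fin (2 * m))) :
    StrictMono (fun k => canon τ (fe k)) := by
  have hmono : Monotone ((fun k => tau1 τ (fe k)) ∘ (sortp τ)) := Tuple.monotone_sort _
  have hinj : Function.Injective (fun k => canon τ (fe k)) :=
    fun a b h => fe_injective ((canon τ).injective h)
  have : (fun k => canon τ (fe k)) = (fun k => tau1 τ (fe k)) ∘ (sortp τ) := by
    funext k; rw [canon_fe]; rfl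
  rw [this] at hinj ⊢
  exact hmono.strictMono_of_injective hinj

lemma canon_mem (τ : Equiv.Perm (Fin (2 * m))) :
    (∀ k : Fin m, canon τ (fe k) < canon τ (fo k)) ∧
      ∀ k l : Fin m, k < l → canon τ (fe k) < canon τ (fe l) := by
  constructor
  · intro k; rw [canon_fe, canon_fo]; exact tau1_lt τ _
  · intro k l hkl; exact canon_strictMono τ hkl

lemma canon_spec (τ : Equiv.Perm (Fin (2 * m))) :
    canon τ * P (sfun τ) (sortp τ)⁻¹ = τ := by
  rw [canon, tau1, mul_assoc (τ * P (sfun τ) 1), P_mul]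
  have h1 : (fun k => xor ((fun _ => false) ((sortp τ)⁻¹ k)) (sfun τ k)) = sfun τ := by
    funext k; simp
  rw [h1]
  rw [show (sortp τ) * (sortp τ)⁻¹ = 1 from by group]
  rw [mul_assoc τ, P_mul]
  have h2 : (fun k => xor (sfun τ ((1 : Equiv.Perm (Fin m)) k)) (sfun τ k))
      = fun _ : Fin m => false := by
    funext k; simp
  rw [h2, one_mul, P_one, mul_one]

end Orbit

end PfAux

namespace PfAux

open Equiv Equiv.Perm Finset

variable {m : ℕ} {R : Type*} [CommRing R]

lemma comp_apply_fe (σ : Equiv.Perm (Fin (2 * m))) (s : Fin m → Bool) (π : Equiv.Perm (Fin m))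
    (k : Fin m) :
    (σ * P s π) (fe k) = if s k then σ (fo (π k)) else σ (fe (π k)) := by
  rw [Equiv.Perm.mul_apply, P_apply_fe, apply_ite σ]

lemma comp_apply_fo (σ : Equiv.Perm (Fin (2 * m))) (s : Fin m → Bool) (π : Equiv.Perm (Fin m))
    (k : Fin m) :
    (σ * P s π) (fo k) = if s k then σ (fe (π k)) else σ (fo (π k)) := by
  rw [Equiv.Perm.mul_apply, P_apply_fo, apply_ite σ]

variable {σ : Equiv.Perm (Fin (2 * m))} (hσ1 : ∀ k : Fin m, σ (fe k) < σ (fo k))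

include hσ1

lemma sfun_comp (s : Fin m → Bool) (π : Equiv.Perm (Fin m)) :
    sfun (σ * P s π) = s := by
  funext k
  rw [sfun, comp_apply_fe, comp_apply_fo]
  cases hs : s k
  · simp only [Bool.false_eq_true, if_false]
    exact decide_eq_false (asymm (hσ1 (π k)))
  · simp only [if_true]
    exact decide_eq_true (hσ1 (π k))

lemma tau1_comp (s : Fin m → Bool) (π : Equiv.Perm (Fin m)) :
    tau1 (σ * P s π) = σ * P (fun _ => false) π := by
  rw [tau1, sfun_comp hσ1, mul_assoc, P_mul]
  rw [show (fun k => xor (s ((1 : Equiv.Perm (Fin m)) k)) (s k)) = fun _ : Fin m => false from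
    by funext k; simp]
  rw [mul_one]

lemma sortp_comp (hσ2 : ∀ k l : Fin m, k < l → σ (fe k) < σ (fe l))
    (s : Fin m → Bool) (π : Equiv.Perm (Fin m)) :
    sortp (σ * P s π) = π⁻¹ := by
  have hb : StrictMono (fun k => σ (fe k)) := fun a b hab => hσ2 a b hab
  have hfun : (fun k => tau1 (σ * P s π) (fe k)) = (fun k => σ (fe k)) ∘ ⇑π := by
    funext k
    rw [tau1_comp hσ1, comp_apply_fe]
    simp
  have h1 : Monotone ((fun k => tau1 (σ * P s π) (fe k)) ∘ ⇑(sortp (σ * P s π))) :=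
    Tuple.monotone_sort _
  have h2 : Monotone ((fun k => tau1 (σ * P s π) (fe k)) ∘ ⇑π⁻¹) := by
    rw [hfun]
    have : ((fun k => σ (fe k)) ∘ ⇑π) ∘ ⇑π⁻¹ = fun k => σ (fe k) := by
      funext k; simp
    rw [this]
    exact hb.monotone
  have huniq := Tuple.unique_monotone h1 h2
  have hinj : Function.Injective (fun k => tau1 (σ * P s π) (fe k)) := by
    rw [hfun]
    exact (hb.injective).comp π.injective
  apply Equiv.ext
  intro x
  exact hinj (congrFun huniq x)

lemma canon_comp (hσ2 : ∀ k l : Fin m, k < l → σ (fe k) < σ (fe l))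
    (s : Fin m → Bool) (π : Equiv.Perm (Fin m)) :
    canon (σ * P s π) = σ := by
  rw [canon, tau1_comp hσ1, sortp_comp hσ1 hσ2, mul_assoc, P_mul]
  have h1 : (fun k => xor ((fun _ : Fin m => false) (π⁻¹ k)) false) = fun _ : Fin m => false := by
    funext k; simp
  rw [h1]
  rw [show π * π⁻¹ = 1 from by group, P_one, mul_one]

omit hσ1

lemma orbit_sum (M : Matrix (Fin (2 * m)) (Fin (2 * m)) R)
    (hskew : ∀ i j, M j i = - M i j) :
    ∑ τ : Equiv.Perm (Fin (2 * m)), Fterm M τ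
      = (Fintype.card ((Fin m → Bool) × Equiv.Perm (Fin m))) •
        ∑ σ ∈ Finset.univ.filter (fun σ : Equiv.Perm (Fin (2 * m)) =>
            (∀ k : Fin m, σ (fe k) < σ (fo k)) ∧
            ∀ k l : Fin m, k < l → σ (fe k) < σ (fe l)),
          Fterm M σ := by
  have key : ∑ x ∈ (Finset.univ.filter (fun σ : Equiv.Perm (Fin (2 * m)) =>
        (∀ k : Fin m, σ (fe k) < σ (fo k)) ∧
        ∀ k l : Fin m, k < l → σ (fe k) < σ (fe l))) ×ˢ
          (Finset.univ : Finset ((Fin m → Bool) × Equiv.Perm (Fin m))),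
      Fterm M x.1 = ∑ τ : Equiv.Perm (Fin (2 * m)), Fterm M τ := by
    refine Finset.sum_nbij' (fun x => x.1 * P x.2.1 x.2.2)
      (fun τ => (canon τ, (sfun τ, (sortp τ)⁻¹))) ?_ ?_ ?_ ?_ ?_
    · intro a _; exact Finset.mem_univ _
    · intro τ _
      rw [Finset.mem_product]
      refine ⟨?_, Finset.mem_univ _⟩
      rw [Finset.mem_filter]
      exact ⟨Finset.mem_univ _, canon_mem τ⟩
    · rintro ⟨σ, s, π⟩ ha
      rw [Finset.mem_product, Finset.mem_filter] at ha
      obtain ⟨⟨-, hσ1, hσ2⟩, -⟩ := ha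
      have e1 := canon_comp hσ1 hσ2 s π
      have e2 := sfun_comp hσ1 s π
      have e3 := sortp_comp hσ1 hσ2 s π
      simp only [e1, e2, e3, inv_inv]
    · intro τ _
      exact canon_spec τ
    · rintro ⟨σ, s, π⟩ ha
      rw [Finset.mem_product, Finset.mem_filter] at ha
      exact (Fterm_invariant M hskew σ s π).symm
  rw [← key, Finset.sum_product]
  rw [Finset.smul_sum]
  apply Finset.sum_congr rfl
  intro σ _
  show ∑ _y : ((Fin m → Bool) × Equiv.Perm (Fin m)), Fterm M σ = _
  rw [Finset.sum_const, Finset.card_univ]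

end PfAux

namespace PfAux

open Equiv Equiv.Perm Finset

variable {m n : ℕ} {R : Type*} [CommRing R]

def cg (g : Fin m → Fin (2 * n)) (j : Fin (2 * m)) : Fin (2 * n) :=
  if j.1 % 2 = 0 then g ⟨j.1 / 2, by have := j.isLt; omega⟩
  else mir (g ⟨j.1 / 2, by have := j.isLt; omega⟩)

lemma cg_fe (g : Fin m → Fin (2 * n)) (k : Fin m) : cg g (fe k) = g k := by
  have hk := k.isLt
  rw [cg, if_pos (show (fe k).1 % 2 = 0 from by simp only [fe]; omega)]
  congr 1
  apply Fin.ext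
  simp [fe]

lemma cg_fo (g : Fin m → Fin (2 * n)) (k : Fin m) : cg g (fo k) = mir (g k) := by
  have hk := k.isLt
  rw [cg, if_neg (show ¬ (fo k).1 % 2 = 0 from by simp only [fo]; omega)]
  congr 2
  apply Fin.ext
  simp [fo]
  try omega

def epsR (R : Type*) [CommRing R] {n : ℕ} (a : Fin (2 * n)) : R :=
  if a.1 < n then 1 else -1

@[simp] lemma epsR_colLow (k : Fin n) : epsR R (colLow k) = 1 := by
  have := k.isLt
  rw [epsR, if_pos]
  exact this

@[simp] lemma epsR_colHigh (k : Fin n) : epsR R (colHigh k) = -1 := by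
  have := k.isLt
  rw [epsR, if_neg]
  show ¬ 2 * n - 1 - k.1 < n
  omega

/-- low/high pairing equivalence -/
def eLH : Fin n × Bool ≃ Fin (2 * n) where
  toFun x := if x.2 then colHigh x.1 else colLow x.1
  invFun a := (rep a, decide (¬ a.1 < n))
  left_inv := by
    rintro ⟨k, b⟩
    have hk := k.isLt
    cases b
    · simp only [Bool.false_eq_true, if_false]
      refine Prod.ext ?_ ?_
      · exact rep_colLow k
      · show decide (¬ (colLow k).1 < n) = false
        rw [decide_eq_false]
        show ¬ ¬ (k.1 < n); omega
    · simp only [if_true]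
      refine Prod.ext ?_ ?_
      · exact rep_colHigh k
      · show decide (¬ (colHigh k).1 < n) = true
        rw [decide_eq_true]
        show ¬ (2 * n - 1 - k.1 < n); omega
  right_inv := by
    intro a
    by_cases h : a.1 < n
    · show (if (decide ¬ a.1 < n) then _ else _) = a
      rw [decide_eq_false (by omega : ¬ ¬ a.1 < n)]
      simp only [Bool.false_eq_true, if_false]
      exact colLow_rep_of_lt h
    · show (if (decide ¬ a.1 < n) then _ else _) = a
      rw [decide_eq_true h]
      simp only [if_true]
      exact colHigh_rep_of_ge h

/-- the skew matrix built from `S` -/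
def MS (S : Matrix (Fin (2 * m)) (Fin (2 * n)) R) : Matrix (Fin (2 * m)) (Fin (2 * m)) R :=
  Matrix.of fun i j : Fin (2 * m) =>
    ∑ k : Fin n, (S i (colLow k) * S j (colHigh k) - S j (colLow k) * S i (colHigh k))

lemma MS_skew (S : Matrix (Fin (2 * m)) (Fin (2 * n)) R) (i j : Fin (2 * m)) :
    MS S j i = - MS S i j := by
  simp only [MS, Matrix.of_apply, ← Finset.sum_neg_distrib]
  apply Finset.sum_congr rfl
  intro k _
  ring

lemma MS_eq (S : Matrix (Fin (2 * m)) (Fin (2 * n)) R) (i j : Fin (2 * m)) :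
    MS S i j = ∑ a : Fin (2 * n), epsR R a * (S i a * S j (mir a)) := by
  rw [show (∑ a : Fin (2 * n), epsR R a * (S i a * S j (mir a)))
      = ∑ x : Fin n × Bool, epsR R (eLH x) * (S i (eLH x) * S j (mir (eLH x))) from
    (Equiv.sum_comp eLH _).symm]
  rw [Fintype.sum_prod_type]
  simp only [MS, Matrix.of_apply]
  apply Finset.sum_congr rfl
  intro k _
  rw [Fintype.sum_bool]
  have h1 : (eLH (k, true) : Fin (2 * n)) = colHigh k := rfl
  have h2 : (eLH (k, false) : Fin (2 * n)) = colLow k := rfl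
  rw [h1, h2, mir_colHigh, mir_colLow, epsR_colHigh, epsR_colLow]
  ring

lemma prod_pairs (h : Fin (2 * m) → R) :
    ∏ j : Fin (2 * m), h j = ∏ k : Fin m, (h (fe k) * h (fo k)) := by
  rw [show (∏ j : Fin (2 * m), h j) = ∏ x : Fin m × Bool, h (eP x) from
    (Equiv.prod_comp eP h).symm]
  rw [Fintype.prod_prod_type]
  apply Finset.prod_congr rfl
  intro k _
  rw [Fintype.prod_bool]
  show h (fo k) * h (fe k) = _
  ring

lemma expansion (S : Matrix (Fin (2 * m)) (Fin (2 * n)) R) :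
    ∑ τ : Equiv.Perm (Fin (2 * m)), Fterm (MS S) τ
      = ∑ g : Fin m → Fin (2 * n),
          (∏ k : Fin m, epsR R (g k)) * (S.submatrix id (cg g)).det := by
  have hdet : ∀ g : Fin m → Fin (2 * n), (S.submatrix id (cg g)).det
      = ∑ τ : Equiv.Perm (Fin (2 * m)), (Equiv.Perm.sign τ : ℤ) • ∏ j, S (τ j) (cg g j) := by
    intro g
    rw [Matrix.det_apply]
    apply Finset.sum_congr rfl
    intro τ _
    rw [Units.smul_def]
    congr 1
  calc ∑ τ : Equiv.Perm (Fin (2 * m)), Fterm (MS S) τ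
      = ∑ τ : Equiv.Perm (Fin (2 * m)), ∑ g : Fin m → Fin (2 * n),
          (Equiv.Perm.sign τ : ℤ) •
            ((∏ k : Fin m, epsR R (g k)) * ∏ j, S (τ j) (cg g j)) := by
        apply Finset.sum_congr rfl
        intro τ _
        rw [Fterm]
        rw [show (∏ k : Fin m, MS S (τ (fe k)) (τ (fo k)))
            = ∏ k : Fin m, ∑ a : Fin (2 * n), epsR R a * (S (τ (fe k)) a * S (τ (fo k)) (mir a))
          from Finset.prod_congr rfl fun k _ => MS_eq S _ _]
        rw [Finset.prod_univ_sum]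
        rw [Finset.smul_sum]
        rw [show (Fintype.piFinset fun _ : Fin m => (Finset.univ : Finset (Fin (2 * n))))
          = Finset.univ from Fintype.piFinset_univ]
        apply Finset.sum_congr rfl
        intro g _
        congr 1
        rw [Finset.prod_mul_distrib]
        congr 1
        rw [prod_pairs (fun j => S (τ j) (cg g j))]
        apply Finset.prod_congr rfl
        intro k _
        rw [cg_fe, cg_fo]
        try ring
    _ = ∑ g : Fin m → Fin (2 * n), ∑ τ : Equiv.Perm (Fin (2 * m)),
          (∏ k : Fin m, epsR R (g k)) *
            ((Equiv.Perm.sign τ : ℤ) • ∏ j, S (τ j) (cg g j)) := by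
        rw [Finset.sum_comm]
        apply Finset.sum_congr rfl
        intro g _
        apply Finset.sum_congr rfl
        intro τ _
        first
        | exact mul_smul_comm _ _ _
        | exact (mul_smul_comm _ _ _).symm
        | exact smul_mul_assoc _ _ _
        | exact (smul_mul_assoc _ _ _).symm
    _ = ∑ g : Fin m → Fin (2 * n),
          (∏ k : Fin m, epsR R (g k)) * (S.submatrix id (cg g)).det := by
        apply Finset.sum_congr rfl
        intro g _
        rw [hdet, Finset.mul_sum]

end PfAux

namespace PfAux

open Equiv Equiv.Perm Finset

variable {m n : ℕ} {R : Type*} [CommRing R]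

lemma bad_det_zero (S : Matrix (Fin (2 * m)) (Fin (2 * n)) R) {g : Fin m → Fin (2 * n)}
    (hbad : ¬ Function.Injective (fun k => rep (g k))) :
    (S.submatrix id (cg g)).det = 0 := by
  rw [Function.not_injective_iff] at hbad
  obtain ⟨a, b, hab, hne⟩ := hbad
  rcases rep_eq_cases hab with h1 | h1
  · refine Matrix.det_zero_of_column_eq (fun h => hne (fe_injective h)) (fun r => ?_)
    simp only [Matrix.submatrix_apply, id_eq, cg_fe, h1]
  · refine Matrix.det_zero_of_column_eq (fe_ne_fo a b) (fun r => ?_)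
    simp only [Matrix.submatrix_apply, id_eq, cg_fe, cg_fo, h1]

/-- forward map of the good-`g` bijection -/
def gMap (x : (Fin m → Fin n) × ((Fin m → Bool) × Equiv.Perm (Fin m))) :
    Fin m → Fin (2 * n) :=
  fun k => if x.2.1 k then colHigh (x.1 (x.2.2 k)) else colLow (x.1 (x.2.2 k))

lemma rep_gMap (x : (Fin m → Fin n) × ((Fin m → Bool) × Equiv.Perm (Fin m))) (k : Fin m) :
    rep (gMap x k) = x.1 (x.2.2 k) := by
  rw [gMap]
  cases h : x.2.1 k <;> simp

lemma cg_gMap (x : (Fin m → Fin n) × ((Fin m → Bool) × Equiv.Perm (Fin m)))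
    (j : Fin (2 * m)) :
    cg (gMap x) j = cg (fun k => colLow (x.1 k)) (P x.2.1 x.2.2 j) := by
  obtain ⟨⟨k, b⟩, rfl⟩ := eP.surjective j
  cases b
  · rw [eP_false, cg_fe, P_apply_fe]
    cases h : x.2.1 k
    · rw [if_neg (by simp), cg_fe]
      simp [gMap, h]
    · rw [if_pos rfl, cg_fo, mir_colLow]
      simp [gMap, h]
  · rw [eP_true, cg_fo, P_apply_fo]
    cases h : x.2.1 k
    · rw [if_neg (by simp), cg_fo, mir_colLow]
      simp [gMap, h]
    · rw [if_pos rfl, cg_fe]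
      simp [gMap, h, mir_colHigh]

lemma mirrorCols_cg (f : Fin m → Fin n) (j : Fin (2 * m)) :
    mirrorCols f j = cg (fun k => colLow (f k)) (rho j) := by
  by_cases h : j.1 < m
  · rw [show (rho j : Fin (2 * m)) = fe ⟨j.1, h⟩ from dif_pos h, cg_fe]
    rw [mirrorCols, dif_pos h]
  · rw [show (rho j : Fin (2 * m)) = fo ⟨2 * m - 1 - j.1, by have := j.isLt; omega⟩ from
      dif_neg h, cg_fo, mir_colLow]
    rw [mirrorCols, dif_neg h]

lemma weight_eq (S : Matrix (Fin (2 * m)) (Fin (2 * n)) R)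
    (x : (Fin m → Fin n) × ((Fin m → Bool) × Equiv.Perm (Fin m))) :
    (∏ k : Fin m, epsR R (gMap x k)) * (S.submatrix id (cg (gMap x))).det
      = (S.submatrix id (mirrorCols x.1)).det := by
  obtain ⟨f, s, π⟩ := x
  set δ : Equiv.Perm (Fin (2 * m)) := (rho (m := m))⁻¹ * P s π with hδ
  have hcg : cg (gMap (f, s, π)) = fun j => mirrorCols f (δ j) := by
    funext j
    rw [cg_gMap]
    rw [show mirrorCols f (δ j) = cg (fun k => colLow (f k))
      (rho (δ j)) from mirrorCols_cg f _]
    congr 1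
    rw [hδ]
    simp [Equiv.Perm.mul_apply]
  have hsub : S.submatrix id (cg (gMap (f, s, π)))
      = (S.submatrix id (mirrorCols f)).submatrix id ⇑δ := by
    rw [Matrix.submatrix_submatrix]
    rw [hcg]
    rfl
  rw [hsub, Matrix.det_permute']
  have hsign : ((Equiv.Perm.sign δ : ℤˣ) : ℤ) = esZ s := by
    rw [hδ, _root_.map_mul, map_inv, sign_rho, inv_one, one_mul, sign_P_coe]
  have heps : (∏ k : Fin m, epsR R (gMap (f, s, π) k)) = ((esZ s : ℤ) : R) := by
    rw [esZ_cast]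
    apply Finset.prod_congr rfl
    intro k _
    show epsR R (if s k then colHigh (f (π k)) else colLow (f (π k))) = _
    cases h : s k <;> simp
  have hb : ((esZ s : ℤ) : R) * ((esZ s : ℤ) : R) = 1 := by
    rw [← Int.cast_mul, esZ_mul_self, Int.cast_one]
  rw [heps]
  rw [show ((Equiv.Perm.sign δ : ℤˣ) : R)
      = ((esZ s : ℤ) : R) from by rw [← hsign]]
  rw [← mul_assoc, hb, one_mul]


/-- backward map of the good-`g` bijection -/
def iMap (g : Fin m → Fin (2 * n)) :
    (Fin m → Fin n) × ((Fin m → Bool) × Equiv.Perm (Fin m)) :=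
  (fun k => rep (g (Tuple.sort (fun k => rep (g k)) k)),
    (fun k => decide (¬ (g k).1 < n), (Tuple.sort (fun k => rep (g k)))⁻¹))

lemma gMap_iMap {g : Fin m → Fin (2 * n)} : gMap (iMap g) = g := by
  funext k
  rw [iMap, gMap]
  dsimp only
  have hrep : rep (g ((Tuple.sort (fun k => rep (g k)))
      (((Tuple.sort (fun k => rep (g k)))⁻¹) k))) = rep (g k) := by
    congr 1
    rw [show ∀ (e : Equiv.Perm (Fin m)) x, e (e⁻¹ x) = x from fun e x => Equiv.apply_symm_apply e x]
  rw [hrep]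
  by_cases h : (g k).1 < n
  · simp only [decide_eq_false (by omega : ¬ ¬ (g k).1 < n)]
    simp only [Bool.false_eq_true, if_false]
    exact colLow_rep_of_lt h
  · simp only [decide_eq_true h]
    simp only [if_true]
    exact colHigh_rep_of_ge h

lemma sum_g (S : Matrix (Fin (2 * m)) (Fin (2 * n)) R) :
    ∑ g : Fin m → Fin (2 * n),
        (∏ k : Fin m, epsR R (g k)) * (S.submatrix id (cg g)).det
      = (Fintype.card ((Fin m → Bool) × Equiv.Perm (Fin m))) •
          ∑ f ∈ Finset.univ.filter (fun f : Fin m → Fin n => StrictMono f),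
            (S.submatrix id (mirrorCols f)).det := by
  classical
  rw [← Finset.sum_filter_add_sum_filter_not Finset.univ
    (fun g : Fin m → Fin (2 * n) => Function.Injective (fun k => rep (g k)))]
  have hbadsum : ∑ g ∈ Finset.univ.filter (fun g : Fin m → Fin (2 * n) =>
      ¬ Function.Injective (fun k => rep (g k))),
      (∏ k : Fin m, epsR R (g k)) * (S.submatrix id (cg g)).det = 0 := by
    apply Finset.sum_eq_zero
    intro g hg
    rw [Finset.mem_filter] at hg
    rw [bad_det_zero S hg.2, mul_zero]
  rw [hbadsum, add_zero]
  have hgood : ∑ g ∈ Finset.univ.filter (fun g : Fin m → Fin (2 * n) =>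
        Function.Injective (fun k => rep (g k))),
      (∏ k : Fin m, epsR R (g k)) * (S.submatrix id (cg g)).det
      = ∑ x ∈ (Finset.univ.filter (fun f : Fin m → Fin n => StrictMono f)) ×ˢ
          (Finset.univ : Finset ((Fin m → Bool) × Equiv.Perm (Fin m))),
          (S.submatrix id (mirrorCols x.1)).det := by
    refine Finset.sum_nbij' iMap gMap ?_ ?_ ?_ ?_ ?_
    · -- maps into product set
      intro g hg
      rw [Finset.mem_filter] at hg
      rw [Finset.mem_product, Finset.mem_filter]
      refine ⟨⟨Finset.mem_univ _, ?_⟩, Finset.mem_univ _⟩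
      have hmono : Monotone ((fun k => rep (g k)) ∘ ⇑(Tuple.sort (fun k => rep (g k)))) :=
        Tuple.monotone_sort _
      exact hmono.strictMono_of_injective (hg.2.comp (Tuple.sort _).injective)
    · -- gMap into good set
      intro x hx
      rw [Finset.mem_product, Finset.mem_filter] at hx
      rw [Finset.mem_filter]
      refine ⟨Finset.mem_univ _, ?_⟩
      have hfn : (fun k => rep (gMap x k)) = fun k => x.1 (x.2.2 k) := by
        funext k; exact rep_gMap x k
      rw [show (fun k => rep (gMap x k)) = (fun k => x.1 (x.2.2 k)) from hfn]
      exact (hx.1.2.injective).comp x.2.2.injective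
    · -- left inverse
      intro g hg
      exact gMap_iMap
    · -- right inverse : i (j x) = x  (on product set)
      rintro ⟨f, s, π⟩ hx
      rw [Finset.mem_product, Finset.mem_filter] at hx
      have hf : StrictMono f := hx.1.2
      have hrg : (fun k => rep (gMap (f, s, π) k)) = f ∘ ⇑π := by
        funext k; exact rep_gMap (f, s, π) k
      have hsort : Tuple.sort (fun k => rep (gMap (f, s, π) k)) = π⁻¹ := by
        have h1 : Monotone ((fun k => rep (gMap (f, s, π) k)) ∘
            ⇑(Tuple.sort (fun k => rep (gMap (f, s, π) k)))) := Tuple.monotone_sort _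
        have h2 : Monotone ((fun k => rep (gMap (f, s, π) k)) ∘ ⇑π⁻¹) := by
          rw [hrg]
          have : (f ∘ ⇑π) ∘ ⇑π⁻¹ = f := by funext k; simp
          rw [this]
          exact hf.monotone
        have huniq := Tuple.unique_monotone h1 h2
        have hinj : Function.Injective (fun k => rep (gMap (f, s, π) k)) := by
          rw [hrg]; exact hf.injective.comp π.injective
        exact Equiv.ext fun x => hinj (congrFun huniq x)
      rw [iMap]
      refine Prod.ext ?_ (Prod.ext ?_ ?_)
      · show (fun k => rep (gMap (f, s, π) ((Tuple.sort fun k => rep (gMap (f, s, π) k)) k))) = f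
        funext k
        rw [show ((Tuple.sort fun k => rep (gMap (f, s, π) k)) k) = π⁻¹ k from by rw [hsort]]
        rw [rep_gMap]
        show f (π (π⁻¹ k)) = f k
        rw [show ∀ (e : Equiv.Perm (Fin m)) x, e (e⁻¹ x) = x from fun e x => Equiv.apply_symm_apply e x]
      · show (fun k => decide (¬ (gMap (f, s, π) k).1 < n)) = s
        funext k
        show decide (¬ (if s k then colHigh (f (π k)) else colLow (f (π k)) : Fin (2*n)).1 < n) = s k
        have hlt := (f (π k)).isLt
        cases h : s k
        · rw [if_neg (by simp)]
          exact decide_eq_false (by show ¬ ¬ (colLow (f (π k))).1 < n; show ¬ ¬ (f (π k)).1 < n; omega)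
        · rw [if_pos rfl]
          refine decide_eq_true ?_
          show ¬ (2 * n - 1 - (f (π k)).1) < n
          omega
      · show (Tuple.sort fun k => rep (gMap (f, s, π) k))⁻¹ = π
        rw [hsort, inv_inv]
    · -- weights
      intro g hg
      conv_lhs => rw [← gMap_iMap (g := g)]
      exact weight_eq S (iMap g)
  rw [hgood, Finset.sum_product]
  rw [Finset.smul_sum]
  apply Finset.sum_congr rfl
  intro f _
  show ∑ _y : ((Fin m → Bool) × Equiv.Perm (Fin m)),
    (S.submatrix id (mirrorCols f)).det = _
  rw [Finset.sum_const, Finset.card_univ]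

end PfAux

namespace PfAux

open Equiv Equiv.Perm Finset

variable {m n : ℕ}

lemma both_sides {R : Type*} [CommRing R] (S : Matrix (Fin (2 * m)) (Fin (2 * n)) R) :
    (Fintype.card ((Fin m → Bool) × Equiv.Perm (Fin m))) •
        (∑ f ∈ Finset.univ.filter (fun f : Fin m → Fin n => StrictMono f),
          (S.submatrix id (mirrorCols f)).det)
      = (Fintype.card ((Fin m → Bool) × Equiv.Perm (Fin m))) • Pf (MS S) := by
  calc (Fintype.card ((Fin m → Bool) × Equiv.Perm (Fin m))) •
        (∑ f ∈ Finset.univ.filter (fun f : Fin m → Fin n => StrictMono f),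
          (S.submatrix id (mirrorCols f)).det)
      = ∑ g : Fin m → Fin (2 * n),
          (∏ k : Fin m, epsR R (g k)) * (S.submatrix id (cg g)).det := (sum_g S).symm
    _ = ∑ τ : Equiv.Perm (Fin (2 * m)), Fterm (MS S) τ := (expansion S).symm
    _ = (Fintype.card ((Fin m → Bool) × Equiv.Perm (Fin m))) •
          ∑ σ ∈ Finset.univ.filter (fun σ : Equiv.Perm (Fin (2 * m)) =>
              (∀ k : Fin m, σ (fe k) < σ (fo k)) ∧
              ∀ k l : Fin m, k < l → σ (fe k) < σ (fe l)),
            Fterm (MS S) σ := orbit_sum (MS S) (MS_skew S)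
    _ = (Fintype.card ((Fin m → Bool) × Equiv.Perm (Fin m))) • Pf (MS S) := rfl

abbrev R0 (m n : ℕ) : Type := MvPolynomial (Fin (2 * m) × Fin (2 * n)) ℤ

/-- the generic matrix -/
noncomputable def S0 : Matrix (Fin (2 * m)) (Fin (2 * n)) (R0 m n) :=
  Matrix.of fun i j => MvPolynomial.X (i, j)

lemma generic_id :
    ∑ f ∈ Finset.univ.filter (fun f : Fin m → Fin n => StrictMono f),
        ((S0 (m := m) (n := n)).submatrix id (mirrorCols f)).det
      = Pf (MS (S0 (m := m) (n := n))) := by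
  have h := both_sides (S0 (m := m) (n := n))
  rw [nsmul_eq_mul, nsmul_eq_mul] at h
  have hN : ((Fintype.card ((Fin m → Bool) × Equiv.Perm (Fin m)) : ℕ) : R0 m n) ≠ 0 := by
    rw [Nat.cast_ne_zero]
    exact Fintype.card_ne_zero
  exact mul_left_cancel₀ hN h

theorem main_thm {R : Type*} [CommRing R] (S : Matrix (Fin (2 * m)) (Fin (2 * n)) R) :
    ∑ f ∈ Finset.univ.filter (fun f : Fin m → Fin n => StrictMono f),
        (S.submatrix id (mirrorCols f)).det = Pf (MS S) := by
  classical
  let φ : R0 m n →+* R :=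
    (MvPolynomial.aeval (R := ℤ) (fun p : Fin (2 * m) × Fin (2 * n) => S p.1 p.2)).toRingHom
  have hφX : ∀ i j, φ (S0 i j) = S i j := by
    intro i j
    simp [φ, S0, MvPolynomial.aeval_X]
  have h := congrArg φ (generic_id (m := m) (n := n))
  rw [map_sum] at h
  have hL : ∀ f : Fin m → Fin n,
      φ (((S0 (m := m) (n := n)).submatrix id (mirrorCols f)).det)
        = (S.submatrix id (mirrorCols f)).det := by
    intro f
    rw [RingHom.map_det]
    congr 1
    ext i j
    simp only [Matrix.map_apply, Matrix.submatrix_apply, id_eq]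
    exact hφX _ _
  have hM : ∀ i j, φ (MS (S0 (m := m) (n := n)) i j) = MS S i j := by
    intro i j
    simp only [MS, Matrix.of_apply, map_sum, map_sub, _root_.map_mul]
    exact Finset.sum_congr rfl fun k _ => by rw [hφX, hφX, hφX, hφX]
  have hR : φ (Pf (MS (S0 (m := m) (n := n)))) = Pf (MS S) := by
    rw [Pf, Pf, map_sum]
    apply Finset.sum_congr rfl
    intro σ _
    rw [map_zsmul, map_prod]
    congr 1
    exact Finset.prod_congr rfl fun k _ => hM _ _
  rw [hR] at h
  rw [← h]
  apply Finset.sum_congr rfl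
  intro f _
  exact (hL f).symm

end PfAux


/-- For a `2m × 2n` matrix `S` with `m ≤ n`,
`∑_{k₁ < ⋯ < kₘ ≤ n} det(S_{k₁}, …, S_{kₘ}, S_{2n+1-kₘ}, …, S_{2n+1-k₁})
  = Pf( ∑_{k=1}^{n} ( S_{ik} S_{j,2n+1-k} − S_{jk} S_{i,2n+1-k} ) )`,
where `S_j` denotes the `j`-th column of `S`. -/
theorem sum_det_mirror_eq_pf {R : Type*} [CommRing R] (m n : ℕ)
    (hm : 0 < m) (hmn : m ≤ n) (S : Matrix (Fin (2 * m)) (Fin (2 * n)) R) :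
    ∑ f ∈ Finset.univ.filter (fun f : Fin m → Fin n => StrictMono f),
        (S.submatrix id (mirrorCols f)).det =
      Pf (Matrix.of fun i j : Fin (2 * m) =>
        ∑ k : Fin n,
          (S i (colLow k) * S j (colHigh k) - S j (colLow k) * S i (colHigh k))) := by
  exact PfAux.main_thm S
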